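/- Let $\gamma>\xi>-2$ and set $\theta:=\frac{6+2\xi}{6+2\gamma}$. Then for every radial $u\in C_c^\infty(B)$, $\left(\int_B|x|^{\gamma}|u|^{6+2\gamma}\,dx\right)^{\frac{1}{6+2\gamma}} \;\le\; (4\pi)^{\frac{\theta-1}{2}}\left(\int_B|\nabla u|^2\,dx\right)^{\frac{1-\theta}{2}}\left(\int_B|x|^{\xi}|u|^{6+2\xi}\,dx\right)^{\frac{\theta}{6+2\xi}}.$ -/

import Mathlib

open MeasureTheory Real

/-- `ℝ³` as a Euclidean space. -/
abbrev E3 := EuclideanSpace ℝ (Fin 3)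

section Aux
open Set


lemma vol3 : (volume (Metric.ball (0 : E3) 1)).toReal = 4 * π / 3 := by
  rw [EuclideanSpace.volume_ball]
  have hcard : Fintype.card (Fin 3) = 3 := by simp
  rw [hcard]
  have h32 : Real.Gamma ((3:ℝ)/2 + 1) = 3/4 * Real.sqrt π := by
    rw [Real.Gamma_add_one (by norm_num)]
    have : (3:ℝ)/2 = 1/2 + 1 := by norm_num
    rw [this, Real.Gamma_add_one (by norm_num), Real.Gamma_one_half_eq]
    ring
  have hs : Real.sqrt π > 0 := Real.sqrt_pos.2 Real.pi_pos
  have hsq : Real.sqrt π ^ 3 = π * Real.sqrt π := by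
    have := Real.sq_sqrt Real.pi_pos.le
    nlinarith [this]
  have : ((3:ℕ):ℝ) / 2 + 1 = (3:ℝ)/2 + 1 := by norm_num
  rw [this, h32]
  simp only [ENNReal.ofReal_one, one_pow, one_mul]
  rw [ENNReal.toReal_ofReal (by positivity)]
  rw [hsq]
  field_simp

lemma sph (H : E3 → ℝ) (f : ℝ → ℝ)
    (h1 : ∀ x : E3, x ≠ 0 → H x = f ‖x‖)
    (h0 : ∀ x : E3, x ∉ Metric.ball (0 : E3) 1 → H x = 0) :
    ∫ x in Metric.ball (0 : E3) 1, H x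
      = 4 * π * ∫ y in Ioi (0:ℝ), y ^ 2 * f y := by
  have hball : ∫ x in Metric.ball (0 : E3) 1, H x = ∫ x, H x :=
    setIntegral_eq_integral_of_forall_compl_eq_zero fun x hx => h0 x hx
  have hae : ∫ x, H x = ∫ x : E3, f ‖x‖ := by
    refine integral_congr_ae ?_
    filter_upwards [compl_mem_ae_iff.2 (measure_singleton (0:E3))] with x hx
    exact h1 x hx
  rw [hball, hae, MeasureTheory.integral_fun_norm_addHaar volume f]
  have hdim : Module.finrank ℝ E3 = 3 := finrank_euclideanSpace_fin
  rw [hdim, measureReal_def, vol3]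
  simp only [nsmul_eq_mul, smul_eq_mul, Nat.cast_ofNat]
  norm_num
  ring


noncomputable def e1 : E3 := EuclideanSpace.single (0 : Fin 3) (1:ℝ)

lemma norm_e1 : ‖e1‖ = 1 := by simp [e1, EuclideanSpace.norm_single]

variable {u : E3 → ℝ}

lemma u_eq_g (hrad : ∀ x y : E3, ‖x‖ = ‖y‖ → u x = u y) (x : E3) :
    u x = u (‖x‖ • e1) :=
  hrad x _ (by simp [norm_smul, norm_e1, abs_of_nonneg (norm_nonneg x)])

lemma g_smooth (hs : ContDiff ℝ (⊤ : ℕ∞) u) :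
    ContDiff ℝ (⊤ : ℕ∞) (fun r : ℝ => u (r • e1)) :=
  hs.comp (contDiff_id.smul contDiff_const)

lemma g_deriv_line (hs : ContDiff ℝ (⊤ : ℕ∞) u)
    (hrad : ∀ x y : E3, ‖x‖ = ‖y‖ → u x = u y)
    (v : E3) (hv : ‖v‖ = 1) (r : ℝ) :
    deriv (fun t : ℝ => u (t • e1)) r = fderiv ℝ u (r • v) v := by
  have h1 : (fun t : ℝ => u (t • e1)) = fun t : ℝ => u (t • v) := by
    funext t
    exact (hrad (t • v) (t • e1) (by simp [norm_smul, hv, norm_e1])).symm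
  rw [h1]
  have h2 : HasDerivAt (fun t : ℝ => t • v) v r := by
    simpa using (hasDerivAt_id r).smul_const v
  exact ((hs.differentiable (by norm_num) (r • v)).hasFDerivAt.comp_hasDerivAt r h2).deriv

lemma norm_fderiv_1d (f : ℝ → ℝ) (r : ℝ) : ‖fderiv ℝ f r‖ = |deriv f r| := by
  have h : fderiv ℝ f r = ContinuousLinearMap.smulRight (1 : ℝ →L[ℝ] ℝ) (deriv f r) :=
    by ext; simp
  rw [h, ContinuousLinearMap.norm_smulRight_apply]
  simp [Real.norm_eq_abs]

lemma fderiv_norm_eq (hs : ContDiff ℝ (⊤ : ℕ∞) u)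
    (hrad : ∀ x y : E3, ‖x‖ = ‖y‖ → u x = u y) (x : E3) (hx : x ≠ 0) :
    ‖fderiv ℝ u x‖ = |deriv (fun t : ℝ => u (t • e1)) ‖x‖| := by
  have hxn : (0:ℝ) < ‖x‖ := norm_pos_iff.2 hx
  set v : E3 := ‖x‖⁻¹ • x with hv
  have hvn : ‖v‖ = 1 := by
    rw [hv, norm_smul, norm_inv, norm_norm, inv_mul_cancel₀ hxn.ne']
  have hxv : ‖x‖ • v = x := by
    rw [hv, smul_smul, mul_inv_cancel₀ hxn.ne', one_smul]
  have hd : deriv (fun t : ℝ => u (t • e1)) ‖x‖ = fderiv ℝ u x v := by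
    rw [g_deriv_line hs hrad v hvn ‖x‖, hxv]
  apply le_antisymm
  · have hnormd : DifferentiableAt ℝ (fun y : E3 => ‖y‖) x :=
      (contDiffAt_norm (𝕜 := ℝ) (n := 1) hx).differentiableAt one_ne_zero
    have hgd : DifferentiableAt ℝ (fun t : ℝ => u (t • e1)) ‖x‖ :=
      ((g_smooth hs).differentiable (by norm_num)).differentiableAt
    have hcomp : u = (fun t : ℝ => u (t • e1)) ∘ (fun y : E3 => ‖y‖) := by
      funext y; exact u_eq_g hrad y
    have heq : fderiv ℝ u x =
        (fderiv ℝ (fun t : ℝ => u (t • e1)) ‖x‖).comp (fderiv ℝ (fun y : E3 => ‖y‖) x) := by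
      conv_lhs => rw [hcomp]
      exact fderiv_comp x hgd hnormd
    rw [heq]
    calc ‖(fderiv ℝ (fun t : ℝ => u (t • e1)) ‖x‖).comp (fderiv ℝ (fun y : E3 => ‖y‖) x)‖
        ≤ ‖fderiv ℝ (fun t : ℝ => u (t • e1)) ‖x‖‖ * ‖fderiv ℝ (fun y : E3 => ‖y‖) x‖ :=
          ContinuousLinearMap.opNorm_comp_le _ _
      _ ≤ |deriv (fun t : ℝ => u (t • e1)) ‖x‖| * 1 := by
          gcongr
          · rw [norm_fderiv_1d]
          · exact norm_fderiv_le_of_lipschitz ℝ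
              (lipschitzWith_one_norm (E := E3))
      _ = |deriv (fun t : ℝ => u (t • e1)) ‖x‖| := mul_one _
  · rw [hd]
    calc |fderiv ℝ u x v| ≤ ‖fderiv ℝ u x‖ * ‖v‖ := (fderiv ℝ u x).le_opNorm v
      _ = ‖fderiv ℝ u x‖ := by rw [hvn, mul_one]

lemma g_zero (hsub : tsupport u ⊆ Metric.ball (0 : E3) 1) (r : ℝ) (hr : 1 ≤ |r|) :
    u (r • e1) = 0 := by
  apply image_eq_zero_of_notMem_tsupport
  intro hmem
  have h2 := hsub hmem
  rw [Metric.mem_ball, dist_zero_right, norm_smul, norm_e1, mul_one, Real.norm_eq_abs] at h2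
  exact absurd h2 (not_lt.2 hr)

lemma g_deriv_zero (hsub : tsupport u ⊆ Metric.ball (0 : E3) 1) (s : ℝ) (hr : 1 < |s|) :
    deriv (fun t : ℝ => u (t • e1)) s = 0 := by
  have hev : (fun t : ℝ => u (t • e1)) =ᶠ[nhds s] (fun _ => (0:ℝ)) := by
    have hopen : IsOpen {t : ℝ | 1 < |t|} := isOpen_lt continuous_const continuous_abs
    filter_upwards [hopen.mem_nhds hr] with t ht
    exact g_zero hsub t (le_of_lt ht)
  rw [hev.deriv_eq, deriv_const]

-- integrability of s^2 * (deriv f s)^2 on Ioi 0 given deriv vanishes for |s|>1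
lemma I_integrable {f : ℝ → ℝ} (hf : ContDiff ℝ (⊤ : ℕ∞) f)
    (hz : ∀ s : ℝ, 1 < |s| → deriv f s = 0) :
    IntegrableOn (fun s : ℝ => s ^ 2 * (deriv f s) ^ 2) (Ioi (0:ℝ)) := by
  have hcont : Continuous (deriv f) := hf.continuous_deriv (by norm_num)
  have hFcont : Continuous (fun s : ℝ => s ^ 2 * (deriv f s) ^ 2) := by fun_prop
  have hcs : HasCompactSupport (fun s : ℝ => s ^ 2 * (deriv f s) ^ 2) := by
    apply HasCompactSupport.intro (isCompact_Icc (a := (-1:ℝ)) (b := 1))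
    intro s hsn
    have : 1 < |s| := by
      rw [mem_Icc, not_and_or, not_le, not_le] at hsn
      rcases hsn with h | h
      · rw [abs_of_neg (by linarith)]; linarith
      · rw [abs_of_pos (by linarith)]; linarith
    rw [hz s this, zero_pow two_ne_zero, mul_zero]
  exact (hFcont.integrable_of_hasCompactSupport hcs).integrableOn

lemma pointwise_bound {f : ℝ → ℝ} (hf : ContDiff ℝ (⊤ : ℕ∞) f)
    (hz : ∀ s : ℝ, 1 < |s| → deriv f s = 0) (hf2 : f 2 = 0)
    {r : ℝ} (hr0 : 0 < r) (hr1 : r < 1) :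
    r * (f r) ^ 2 ≤ ∫ s in Ioi (0:ℝ), s ^ 2 * (deriv f s) ^ 2 := by
  set I : ℝ := ∫ s in Ioi (0:ℝ), s ^ 2 * (deriv f s) ^ 2 with hI
  have hIint := I_integrable hf hz
  have hInonneg : 0 ≤ I := setIntegral_nonneg measurableSet_Ioi (fun s _ => by positivity)
  have hcont : Continuous (deriv f) := hf.continuous_deriv (by norm_num)
  -- FTC
  have hftc : ∫ s in r..2, deriv f s = f 2 - f r :=
    intervalIntegral.integral_deriv_eq_sub
      (fun x _ => (hf.differentiable (by norm_num)).differentiableAt)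
      (hcont.intervalIntegrable r 2)
  have habs : |f r| ≤ ∫ s in Ioc r 2, |deriv f s| := by
    have h1 : |f r| = |∫ s in r..2, deriv f s| := by rw [hftc, hf2, zero_sub, abs_neg]
    rw [h1, ← intervalIntegral.integral_of_le (by linarith : r ≤ (2:ℝ))]
    exact intervalIntegral.abs_integral_le_integral_abs (by linarith)
  -- Hölder (Cauchy-Schwarz) on Ioc r 2
  set μr := volume.restrict (Ioc r 2) with hμr
  have hae_pos : ∀ᵐ s ∂μr, s ∈ Ioc r 2 := ae_restrict_mem measurableSet_Ioc
  have hcs : ∫ s in Ioc r 2, |deriv f s|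
      ≤ (∫ s in Ioc r 2, (s * |deriv f s|) ^ (2:ℝ)) ^ (1/2 : ℝ)
        * (∫ s in Ioc r 2, (s⁻¹) ^ (2:ℝ)) ^ (1/2 : ℝ) := by
    have hconj : Real.HolderConjugate 2 2 := Real.HolderConjugate.two_two
    have hmem1 : MemLp (fun s : ℝ => s * |deriv f s|) (ENNReal.ofReal 2) μr := by
      rw [show ENNReal.ofReal 2 = 2 by norm_num]
      rw [memLp_two_iff_integrable_sq (Continuous.aestronglyMeasurable (by continuity))]
      exact (Continuous.integrableOn_Ioc (by continuity))
    have hmem2 : MemLp (fun s : ℝ => s⁻¹) (ENNReal.ofReal 2) μr := by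
      rw [show ENNReal.ofReal 2 = 2 by norm_num]
      rw [memLp_two_iff_integrable_sq (by fun_prop)]
      refine IntegrableOn.mono_set ?_ Ioc_subset_Icc_self
      refine ContinuousOn.integrableOn_Icc ?_
      refine (continuousOn_inv₀.mono ?_).pow 2
      intro s hs h0
      rw [mem_singleton_iff] at h0
      rw [h0, mem_Icc] at hs
      linarith [hs.1]
    have := MeasureTheory.integral_mul_le_Lp_mul_Lq_of_nonneg hconj
      (f := fun s : ℝ => s * |deriv f s|) (g := fun s : ℝ => s⁻¹)
      (μ := μr)
      (by filter_upwards [hae_pos] with s hs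
          have h0 : (0:ℝ) < s := lt_trans hr0 hs.1
          positivity)
      (by filter_upwards [hae_pos] with s hs
          exact inv_nonneg.2 (le_of_lt (lt_trans hr0 hs.1)))
      hmem1 hmem2
    calc ∫ s in Ioc r 2, |deriv f s|
        = ∫ s in Ioc r 2, (s * |deriv f s|) * s⁻¹ := by
          refine setIntegral_congr_fun measurableSet_Ioc (fun s hs => ?_)
          have hs0 : s ≠ 0 := (lt_trans hr0 hs.1).ne'
          field_simp
      _ ≤ _ := this
  -- bound the two factors
  have hfac1 : ∫ s in Ioc r 2, (s * |deriv f s|) ^ (2:ℝ) ≤ I := by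
    have heq : ∀ s : ℝ, (s * |deriv f s|) ^ (2:ℝ) = s ^ 2 * (deriv f s) ^ 2 := by
      intro s
      rw [show ((2:ℝ)) = ((2:ℕ):ℝ) by norm_num, Real.rpow_natCast]
      rw [mul_pow, sq_abs]
    simp_rw [heq]
    refine setIntegral_mono_set hIint ?_ ?_
    · filter_upwards with s; positivity
    · exact HasSubset.Subset.eventuallyLE (fun s hs => lt_trans hr0 hs.1)
  have hfac2 : ∫ s in Ioc r 2, (s⁻¹) ^ (2:ℝ) ≤ r⁻¹ := by
    have heq : ∀ s : ℝ, (s⁻¹) ^ (2:ℝ) = (s⁻¹) ^ (2:ℕ) := by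
      intro s
      rw [show ((2:ℝ)) = ((2:ℕ):ℝ) by norm_num, Real.rpow_natCast]
    simp_rw [heq]
    have hint : ∫ s in Ioc r 2, (s⁻¹) ^ (2:ℕ) = r⁻¹ - 2⁻¹ := by
      rw [← intervalIntegral.integral_of_le (by linarith : r ≤ (2:ℝ))]
      have hderiv : ∀ s ∈ uIcc r 2, HasDerivAt (fun t : ℝ => -t⁻¹) ((s⁻¹) ^ (2:ℕ)) s := by
        intro s hs
        have hs0 : s ≠ 0 := by
          rw [uIcc_of_le (by linarith : r ≤ (2:ℝ)), mem_Icc] at hs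
          exact (lt_of_lt_of_le hr0 hs.1).ne'
        have := (hasDerivAt_inv hs0).neg
        refine this.congr_deriv ?_
        rw [inv_pow]
        ring
      have hii : IntervalIntegrable (fun s : ℝ => (s⁻¹) ^ (2:ℕ)) volume r 2 := by
        apply ContinuousOn.intervalIntegrable
        refine (continuousOn_inv₀.mono ?_).pow 2
        intro s hs h0
        rw [mem_singleton_iff] at h0
        rw [h0, uIcc_of_le (by linarith : r ≤ (2:ℝ)), mem_Icc] at hs
        linarith [hs.1]
      rw [intervalIntegral.integral_eq_sub_of_hasDerivAt hderiv hii]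
      ring
    rw [hint]
    have : (0:ℝ) < 2⁻¹ := by norm_num
    linarith
  -- combine
  have hnn1 : 0 ≤ ∫ s in Ioc r 2, (s * |deriv f s|) ^ (2:ℝ) := by
    refine setIntegral_nonneg measurableSet_Ioc (fun s hs => ?_)
    have h0 : (0:ℝ) < s := lt_trans hr0 hs.1
    apply Real.rpow_nonneg
    positivity
  have hnn2 : 0 ≤ ∫ s in Ioc r 2, (s⁻¹) ^ (2:ℝ) := by
    refine setIntegral_nonneg measurableSet_Ioc (fun s hs => ?_)
    exact Real.rpow_nonneg (inv_nonneg.2 (le_of_lt (lt_trans hr0 hs.1))) _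
  have hub : |f r| ≤ I ^ (1/2:ℝ) * (r⁻¹) ^ (1/2:ℝ) := by
    refine le_trans habs (le_trans hcs ?_)
    exact mul_le_mul (Real.rpow_le_rpow hnn1 hfac1 (by norm_num))
      (Real.rpow_le_rpow hnn2 hfac2 (by norm_num))
      (Real.rpow_nonneg hnn2 _) (Real.rpow_nonneg hInonneg _)
  have hsq : (f r) ^ 2 ≤ I * r⁻¹ := by
    have h := mul_le_mul hub hub (abs_nonneg _)
      (by positivity)
    calc (f r)^2 = |f r| * |f r| := by rw [← sq_abs, sq]
    _ ≤ (I ^ (1/2:ℝ) * (r⁻¹) ^ (1/2:ℝ)) * (I ^ (1/2:ℝ) * (r⁻¹) ^ (1/2:ℝ)) := h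
    _ = (I ^ (1/2:ℝ) * I ^ (1/2:ℝ)) * ((r⁻¹) ^ (1/2:ℝ) * (r⁻¹) ^ (1/2:ℝ)) := by ring
    _ = I * r⁻¹ := by
        rw [← Real.rpow_add' hInonneg (by norm_num),
          ← Real.rpow_add' (inv_nonneg.2 hr0.le) (by norm_num)]
        norm_num
  calc r * (f r)^2 ≤ r * (I * r⁻¹) := by nlinarith
  _ = I := by field_simp

lemma wint {f : ℝ → ℝ} (hf : Continuous f) (hzero : ∀ r : ℝ, 1 ≤ |r| → f r = 0)
    {c : ℝ} (hc : -2 < c) :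
    IntegrableOn (fun y : ℝ => y ^ (2:ℕ) * (y ^ c * |f y| ^ (6 + 2*c))) (Ioi (0:ℝ)) := by
  have hp : (0:ℝ) < 6 + 2*c := by linarith
  have hmeas : ∀ s : Set ℝ, AEStronglyMeasurable
      (fun y : ℝ => y ^ (2:ℕ) * (y ^ c * |f y| ^ (6 + 2*c))) (volume.restrict s) := by
    intro s
    apply Measurable.aestronglyMeasurable
    have := hf.measurable
    measurability
  -- bound for f
  have hcsf : HasCompactSupport f := by
    apply HasCompactSupport.intro (isCompact_Icc (a := (-1:ℝ)) (b := 1))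
    intro y hy
    apply hzero
    rw [mem_Icc, not_and_or, not_le, not_le] at hy
    rcases hy with h | h
    · rw [abs_of_neg (by linarith)]; linarith
    · rw [abs_of_pos (by linarith)]; linarith
  obtain ⟨M, hM⟩ := hcsf.exists_bound_of_continuous hf
  simp only [Real.norm_eq_abs] at hM
  have hM0 : 0 ≤ M := le_trans (abs_nonneg (f 0)) (hM 0)
  rw [← Ioc_union_Ioi_eq_Ioi (zero_le_one (α := ℝ))]
  apply IntegrableOn.union
  · -- on Ioc 0 1, dominate by M^(6+2c) * y^(2+c)
    have hdom : IntegrableOn (fun y : ℝ => M ^ (6+2*c) * y ^ (2+c)) (Ioc (0:ℝ) 1) := by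
      have := intervalIntegral.intervalIntegrable_rpow' (a := 0) (b := 1)
        (show (-1:ℝ) < 2 + c by linarith)
      rw [intervalIntegrable_iff_integrableOn_Ioc_of_le zero_le_one] at this
      exact this.const_mul _
    refine Integrable.mono' hdom (hmeas _) ?_
    filter_upwards [ae_restrict_mem measurableSet_Ioc] with y hy
    have hy0 : (0:ℝ) < y := hy.1
    have h1 : |f y| ^ (6 + 2*c) ≤ M ^ (6 + 2*c) :=
      Real.rpow_le_rpow (abs_nonneg _) (hM y) hp.le
    have h2 : y ^ (2:ℕ) * y ^ c = y ^ (2 + c) := by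
      rw [← Real.rpow_natCast y 2, ← Real.rpow_add hy0]
      norm_num
    rw [Real.norm_eq_abs, abs_of_nonneg (by positivity)]
    calc y ^ (2:ℕ) * (y ^ c * |f y| ^ (6 + 2*c))
        ≤ y ^ (2:ℕ) * (y ^ c * M ^ (6 + 2*c)) := by
          have h4 : (0:ℝ) ≤ y ^ (2:ℕ) := by positivity
          have h3 : (0:ℝ) ≤ y ^ c := Real.rpow_nonneg hy0.le _
          exact mul_le_mul_of_nonneg_left (mul_le_mul_of_nonneg_left h1 h3) h4
      _ = M ^ (6+2*c) * y ^ (2+c) := by rw [← h2]; ring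
  · -- zero on Ioi 1
    refine IntegrableOn.congr_fun (integrableOn_zero) ?_ measurableSet_Ioi
    intro y hy
    have h1y : (1:ℝ) < y := hy
    have : f y = 0 := hzero y (by rw [abs_of_pos (by linarith)]; linarith)
    simp [this, Real.zero_rpow hp.ne']
end Aux

open Set in
/-- Interpolation between weighted critical norms: for `γ > ξ > -2` and
`θ = (6+2ξ)/(6+2γ)`,
`‖u‖_{L^{6+2γ}(B;|x|^γ)} ≤ (4π)^{(θ-1)/2} ‖∇u‖₂^{1-θ} ‖u‖_{L^{6+2ξ}(B;|x|^ξ)}^θ`. -/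
theorem stmt9 (γ ξ : ℝ) (hξ : -2 < ξ) (hγξ : ξ < γ)
    (θ : ℝ) (hθ : θ = (6 + 2 * ξ) / (6 + 2 * γ))
    (u : E3 → ℝ) (hs : ContDiff ℝ (⊤ : ℕ∞) u) (hc : HasCompactSupport u)
    (hsub : tsupport u ⊆ Metric.ball (0 : E3) 1)
    (hrad : ∀ x y : E3, ‖x‖ = ‖y‖ → u x = u y) :
    (∫ x in Metric.ball (0 : E3) 1, ‖x‖ ^ γ * |u x| ^ (6 + 2 * γ)) ^ (1 / (6 + 2 * γ))
      ≤ (4 * Real.pi) ^ ((θ - 1) / 2)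
        * (∫ x in Metric.ball (0 : E3) 1, ‖fderiv ℝ u x‖ ^ 2) ^ ((1 - θ) / 2)
        * (∫ x in Metric.ball (0 : E3) 1, ‖x‖ ^ ξ * |u x| ^ (6 + 2 * ξ)) ^ (θ / (6 + 2 * ξ)) := by
  have hγ : -2 < γ := lt_trans hξ hγξ
  have h6γ : (0:ℝ) < 6 + 2*γ := by linarith
  have h6ξ : (0:ℝ) < 6 + 2*ξ := by linarith
  set g : ℝ → ℝ := fun r => u (r • e1) with hgdef
  have hgsmooth : ContDiff ℝ (⊤:ℕ∞) g := g_smooth hs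
  have hgcont : Continuous g := hgsmooth.continuous
  have hgzero : ∀ r : ℝ, 1 ≤ |r| → g r = 0 := g_zero hsub
  have hdz : ∀ s : ℝ, 1 < |s| → deriv g s = 0 := g_deriv_zero hsub
  set I : ℝ := ∫ s in Ioi (0:ℝ), s ^ 2 * (deriv g s) ^ 2 with hIdef
  set A1 : ℝ := ∫ y in Ioi (0:ℝ), y ^ 2 * (y ^ γ * |g y| ^ (6 + 2*γ)) with hA1def
  set B1 : ℝ := ∫ y in Ioi (0:ℝ), y ^ 2 * (y ^ ξ * |g y| ^ (6 + 2*ξ)) with hB1def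
  -- spherical conversions
  have hDconv : ∫ x in Metric.ball (0:E3) 1, ‖fderiv ℝ u x‖ ^ 2 = 4*π*I := by
    apply sph _ (fun s => (deriv g s) ^ 2)
    · intro x hx
      rw [fderiv_norm_eq hs hrad x hx, sq_abs]
    · intro x hx
      have h0 : fderiv ℝ u x = 0 := by
        by_contra h
        exact hx (hsub (support_fderiv_subset ℝ (by simpa using h)))
      rw [h0]; simp
  have hAconv : ∫ x in Metric.ball (0:E3) 1, ‖x‖ ^ γ * |u x| ^ (6 + 2*γ) = 4*π*A1 := by
    apply sph _ (fun y => y ^ γ * |g y| ^ (6 + 2*γ))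
    · intro x _; rw [u_eq_g hrad x]
    · intro x hx
      have h0 : u x = 0 := image_eq_zero_of_notMem_tsupport (fun hmem => hx (hsub hmem))
      rw [h0]
      simp [Real.zero_rpow (ne_of_gt (by linarith : (0:ℝ) < 6 + 2*γ))]
  have hBconv : ∫ x in Metric.ball (0:E3) 1, ‖x‖ ^ ξ * |u x| ^ (6 + 2*ξ) = 4*π*B1 := by
    apply sph _ (fun y => y ^ ξ * |g y| ^ (6 + 2*ξ))
    · intro x _; rw [u_eq_g hrad x]
    · intro x hx
      have h0 : u x = 0 := image_eq_zero_of_notMem_tsupport (fun hmem => hx (hsub hmem))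
      rw [h0]
      simp [Real.zero_rpow (ne_of_gt (by linarith : (0:ℝ) < 6 + 2*ξ))]
  -- nonnegativity
  have hInonneg : 0 ≤ I :=
    setIntegral_nonneg measurableSet_Ioi fun s _ => by positivity
  have hA1nonneg : 0 ≤ A1 := by
    refine setIntegral_nonneg measurableSet_Ioi fun y hy => ?_
    have hy0 : (0:ℝ) < y := hy
    positivity
  have hB1nonneg : 0 ≤ B1 := by
    refine setIntegral_nonneg measurableSet_Ioi fun y hy => ?_
    have hy0 : (0:ℝ) < y := hy
    positivity
  have hBint : IntegrableOn (fun y : ℝ => y ^ (2:ℕ) * (y ^ ξ * |g y| ^ (6 + 2*ξ))) (Ioi (0:ℝ)) :=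
    wint hgcont hgzero hξ
  have hpw : ∀ r : ℝ, 0 < r → r < 1 → r * (g r) ^ 2 ≤ I :=
    fun r h0 h1 => pointwise_bound hgsmooth hdz (hgzero 2 (by norm_num)) h0 h1
  -- pointwise algebraic identity
  have key : ∀ y : ℝ, 0 < y → y ^ (2:ℕ) * (y ^ γ * |g y| ^ (6 + 2*γ))
      = (y * (g y) ^ 2) ^ (γ - ξ) * (y ^ (2:ℕ) * (y ^ ξ * |g y| ^ (6 + 2*ξ))) := by
    intro y hy
    have habs : (0:ℝ) ≤ |g y| := abs_nonneg _
    have e1 : (y * (g y) ^ 2) ^ (γ - ξ) = y ^ (γ - ξ) * |g y| ^ (2*(γ - ξ)) := by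
      rw [← sq_abs (g y), Real.mul_rpow hy.le (by positivity),
        ← Real.rpow_natCast |g y| 2, ← Real.rpow_mul habs]
      norm_num
    have e2 : y ^ (γ - ξ) * y ^ ξ = y ^ γ := by
      rw [← Real.rpow_add hy]; congr 1; ring
    have e3 : |g y| ^ (2*(γ - ξ)) * |g y| ^ (6 + 2*ξ) = |g y| ^ (6 + 2*γ) := by
      rw [← Real.rpow_add' habs (by intro h; nlinarith)]
      congr 1; ring
    rw [e1, ← e2, ← e3]; ring
  -- comparison
  have hcomp : A1 ≤ I ^ (γ - ξ) * B1 := by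
    rw [hA1def, hB1def, ← integral_const_mul]
    apply integral_mono_of_nonneg
    · filter_upwards [ae_restrict_mem measurableSet_Ioi] with y hy
      have hy0 : (0:ℝ) < y := hy
      positivity
    · exact hBint.const_mul _
    · filter_upwards [ae_restrict_mem measurableSet_Ioi] with y hy
      have hy0 : (0:ℝ) < y := hy
      by_cases hy1 : y < 1
      · rw [key y hy0]
        apply mul_le_mul_of_nonneg_right
        · exact Real.rpow_le_rpow (by positivity) (hpw y hy0 hy1) (by linarith)
        · have : (0:ℝ) ≤ y ^ ξ := Real.rpow_nonneg hy0.le _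
          positivity
      · have hg0 : g y = 0 := hgzero y (by rw [abs_of_pos hy0]; linarith)
        rw [hg0]
        rw [abs_zero, Real.zero_rpow (ne_of_gt (by linarith : (0:ℝ) < 6 + 2*γ)),
          Real.zero_rpow (ne_of_gt (by linarith : (0:ℝ) < 6 + 2*ξ))]
        simp
  -- final algebra
  rw [hAconv, hDconv, hBconv]
  have hP : (0:ℝ) < 4*π := by positivity
  have hθ1 : θ/(6+2*ξ) = 1/(6+2*γ) := by rw [hθ]; field_simp
  have hθ2 : (γ-ξ)/(6+2*γ) = (1-θ)/2 := by
    rw [hθ, one_sub_div h6γ.ne', div_div, div_eq_div_iff h6γ.ne' (by positivity)]; ring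
  rw [Real.mul_rpow hP.le hA1nonneg, Real.mul_rpow hP.le hInonneg, Real.mul_rpow hP.le hB1nonneg]
  have hmain : A1 ^ (1/(6+2*γ)) ≤ I ^ ((1-θ)/2) * B1 ^ (θ/(6+2*ξ)) := by
    calc A1 ^ (1/(6+2*γ)) ≤ (I ^ (γ-ξ) * B1) ^ (1/(6+2*γ)) :=
          Real.rpow_le_rpow hA1nonneg hcomp (by positivity)
    _ = I ^ ((γ-ξ)/(6+2*γ)) * B1 ^ (1/(6+2*γ)) := by
        rw [Real.mul_rpow (Real.rpow_nonneg hInonneg _) hB1nonneg,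
          ← Real.rpow_mul hInonneg]
        congr 2
        field_simp
    _ = I ^ ((1-θ)/2) * B1 ^ (θ/(6+2*ξ)) := by rw [hθ2, hθ1]
  calc (4*π) ^ (1/(6+2*γ)) * A1 ^ (1/(6+2*γ))
      ≤ (4*π) ^ (1/(6+2*γ)) * (I ^ ((1-θ)/2) * B1 ^ (θ/(6+2*ξ))) :=
        mul_le_mul_of_nonneg_left hmain (Real.rpow_nonneg hP.le _)
    _ = ((4*π) ^ ((θ-1)/2) * (4*π) ^ ((1-θ)/2) * (4*π) ^ (θ/(6+2*ξ)))
        * (I ^ ((1-θ)/2) * B1 ^ (θ/(6+2*ξ))) := by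
        rw [← Real.rpow_add hP, ← Real.rpow_add hP, hθ1]
        congr 2
        ring
    _ = (4*π) ^ ((θ-1)/2) * ((4*π) ^ ((1-θ)/2) * I ^ ((1-θ)/2))
        * ((4*π) ^ (θ/(6+2*ξ)) * B1 ^ (θ/(6+2*ξ))) := by ring
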